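/- Let φ : ℝ² → ℝ be a norm, smooth and elliptic (D²(φ²) ≥ C·Id, C > 0). If ν is a unit vector, τ a unit vector orthogonal to ν, and τ̃ a unit vector with Dφ(ν)·τ̃ = 0, then writing τ̃ = ατ + βν with α, β ∈ [−1,1], one has α ≠ 0 and C ≤ 2φ(ν)α² D²φ(ν)τ·τ ≤ 2φ(ν) D²φ(ν)τ·τ. -/

import Mathlib

/-- Dot product on ℝ². -/
def dot2 (a b : ℝ × ℝ) : ℝ := a.1 * b.1 + a.2 * b.2

set_option maxHeartbeats 1000000 in
/-- For a smooth elliptic norm φ, if ν ⊥ τ are unit vectors and τ̃ is a unit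
vector with Dφ(ν)·τ̃ = 0, writing τ̃ = ατ + βν with α, β ∈ [−1,1], one has α ≠ 0 and
C ≤ 2φ(ν)α² D²φ(ν)τ·τ ≤ 2φ(ν) D²φ(ν)τ·τ. -/
theorem stmt2 (φ : ℝ × ℝ → ℝ) (C : ℝ) (hC : 0 < C)
    (hnonneg : ∀ x, 0 ≤ φ x)
    (hhomog : ∀ (c : ℝ) (x : ℝ × ℝ), φ (c • x) = |c| * φ x)
    (htri : ∀ x y, φ (x + y) ≤ φ x + φ y)
    (hdef : ∀ x, φ x = 0 ↔ x = 0)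
    (hsmooth : ContDiffOn ℝ 2 φ {(0 : ℝ × ℝ)}ᶜ)
    (hell : ∀ x : ℝ × ℝ, x ≠ 0 → ∀ ξ : ℝ × ℝ,
      C * ‖ξ‖ ^ 2 ≤ iteratedFDeriv ℝ 2 (fun y => (φ y) ^ 2) x ![ξ, ξ])
    (ν τ τ' : ℝ × ℝ) (hν : ‖ν‖ = 1) (hτ : ‖τ‖ = 1) (hτ' : ‖τ'‖ = 1)
    (horth : dot2 ν τ = 0)
    (hDφ : fderiv ℝ φ ν τ' = 0)
    (α β : ℝ) (hα : α ∈ Set.Icc (-1 : ℝ) 1) (hβ : β ∈ Set.Icc (-1 : ℝ) 1)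
    (hdecomp : τ' = α • τ + β • ν) :
    α ≠ 0 ∧
      C ≤ 2 * φ ν * α ^ 2 * iteratedFDeriv ℝ 2 φ ν ![τ, τ] ∧
      2 * φ ν * α ^ 2 * iteratedFDeriv ℝ 2 φ ν ![τ, τ]
        ≤ 2 * φ ν * iteratedFDeriv ℝ 2 φ ν ![τ, τ] := by
  have hν0 : ν ≠ 0 := by
    intro h; rw [h] at hν; simp at hν
  have hU : {(0 : ℝ × ℝ)}ᶜ ∈ nhds ν := isOpen_compl_singleton.mem_nhds hν0
  have hφν : ContDiffAt ℝ 2 φ ν := hsmooth.contDiffAt hU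
  have hφpos : 0 < φ ν :=
    lt_of_le_of_ne (hnonneg ν) (fun h => hν0 ((hdef ν).1 h.symm))
  set g := fderiv ℝ φ with hg
  have hgd : DifferentiableAt ℝ g ν := (hφν.fderiv_right (m := 1) le_rfl).differentiableAt one_ne_zero
  set B := fderiv ℝ g ν with hBdef
  have hgB : HasFDerivAt g B ν := hgd.hasFDerivAt
  have hφd : HasFDerivAt φ (g ν) ν := (hφν.differentiableAt two_ne_zero).hasFDerivAt
  -- eventual differentiability
  have hev : ∀ᶠ y in nhds ν, HasFDerivAt φ (g y) y := by
    filter_upwards [hU] with y hy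
    exact ((hsmooth.contDiffAt (isOpen_compl_singleton.mem_nhds hy)).differentiableAt
      two_ne_zero).hasFDerivAt
  -- symmetry of second derivative
  have hsymm : ∀ v w, B v w = B w v := fun v w =>
    second_derivative_symmetric_of_eventually hev hgB v w
  -- the ray through ν
  have hline : HasDerivAt (fun t : ℝ => t • ν) ν 1 := by
    simpa using (hasDerivAt_id (1 : ℝ)).smul_const ν
  -- Euler relation 1 : g ν ν = φ ν
  have euler1 : g ν ν = φ ν := by
    have h1 : HasDerivAt (fun t : ℝ => φ (t • ν)) (g ν ν) 1 := by
      have hφd' : HasFDerivAt φ (g ν) ((1 : ℝ) • ν) := by rw [one_smul]; exact hφd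
      exact hφd'.comp_hasDerivAt (1 : ℝ) hline
    have heq : (fun t : ℝ => φ (t • ν)) =ᶠ[nhds (1 : ℝ)] fun t => t * φ ν := by
      filter_upwards [eventually_gt_nhds (by norm_num : (0:ℝ) < 1)] with t ht
      rw [hhomog t ν, abs_of_pos ht]
    have h2 : HasDerivAt (fun t : ℝ => t * φ ν) (g ν ν) 1 := h1.congr_of_eventuallyEq heq.symm
    have h3 : HasDerivAt (fun t : ℝ => t * φ ν) (φ ν) 1 := by
      simpa using (hasDerivAt_id (1 : ℝ)).mul_const (φ ν)
    exact h2.unique h3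
  -- homogeneity of g
  have ghom : ∀ c : ℝ, 0 < c → ∀ x : ℝ × ℝ, x ≠ 0 → g (c • x) = g x := by
    intro c hc x hx
    have hcx : c • x ≠ 0 := smul_ne_zero (ne_of_gt hc) hx
    have hdx : HasFDerivAt φ (g x) x :=
      ((hsmooth.contDiffAt (isOpen_compl_singleton.mem_nhds hx)).differentiableAt
        two_ne_zero).hasFDerivAt
    have hdcx : HasFDerivAt φ (g (c • x)) (c • x) :=
      ((hsmooth.contDiffAt (isOpen_compl_singleton.mem_nhds hcx)).differentiableAt
        two_ne_zero).hasFDerivAt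
    have hL : HasFDerivAt (fun y : ℝ × ℝ => c • y) (c • ContinuousLinearMap.id ℝ (ℝ × ℝ)) x :=
      (ContinuousLinearMap.id ℝ (ℝ × ℝ)).hasFDerivAt.const_smul c
    have hcomp : HasFDerivAt (fun y => φ (c • y))
        ((g (c • x)).comp (c • ContinuousLinearMap.id ℝ (ℝ × ℝ))) x := hdcx.comp x hL
    have hcomp2 : HasFDerivAt (fun y => φ (c • y)) (c • g x) x := by
      have : (fun y : ℝ × ℝ => φ (c • y)) = fun y => c * φ y := by
        funext y; rw [hhomog c y, abs_of_pos hc]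
      rw [this]
      simpa [smul_eq_mul] using hdx.const_mul c
    have huniq := hcomp.unique hcomp2
    refine ContinuousLinearMap.ext fun w => ?_
    have h1 := DFunLike.congr_fun huniq w
    simp only [ContinuousLinearMap.coe_comp', Function.comp_apply,
      ContinuousLinearMap.smul_apply, ContinuousLinearMap.coe_smul',
      Pi.smul_apply, ContinuousLinearMap.id_apply, map_smul, smul_eq_mul] at h1
    exact mul_left_cancel₀ (ne_of_gt hc) h1
  -- Euler relation 2 : B ν = 0
  have euler2 : B ν = 0 := by
    have h1 : HasDerivAt (fun t : ℝ => g (t • ν)) (B ν) 1 := by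
      have hgB' : HasFDerivAt g B ((1 : ℝ) • ν) := by rw [one_smul]; exact hgB
      exact hgB'.comp_hasDerivAt (1 : ℝ) hline
    have heq : (fun t : ℝ => g (t • ν)) =ᶠ[nhds (1 : ℝ)] fun _ => g ν := by
      filter_upwards [eventually_gt_nhds (by norm_num : (0:ℝ) < 1)] with t ht
      exact ghom t ht ν hν0
    have h2 : HasDerivAt (fun _ : ℝ => g ν) (B ν) 1 := h1.congr_of_eventuallyEq heq.symm
    have h3 : HasDerivAt (fun _ : ℝ => g ν) 0 1 := hasDerivAt_const 1 (g ν)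
    exact h2.unique h3
  -- second derivative of φ² at ν
  have hF' : HasFDerivAt (fun y => fderiv ℝ (fun z => φ z ^ 2) y)
      ((2 * φ ν) • B + ((2 : ℝ) • g ν).smulRight (g ν)) ν := by
    have key : ∀ᶠ y in nhds ν,
        fderiv ℝ (fun z => φ z ^ 2) y = (2 * φ y) • g y := by
      filter_upwards [hev] with y hy
      have : HasFDerivAt (fun z => φ z ^ 2) ((2 * φ y) • g y) y := by
        have hmul : HasFDerivAt (fun z => φ z * φ z) (φ y • g y + φ y • g y) y := hy.mul hy
        have : HasFDerivAt (fun z => φ z ^ 2) (φ y • g y + φ y • g y) y := by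
          simpa [pow_two] using hmul
        simpa [two_mul, add_smul] using this
      exact this.fderiv
    have hsmul : HasFDerivAt (fun y => (2 * φ y) • g y)
        ((2 * φ ν) • B + ((2 : ℝ) • g ν).smulRight (g ν)) ν := by
      have hc : HasFDerivAt (fun y => 2 * φ y) ((2 : ℝ) • g ν) ν := by
        simpa [smul_eq_mul] using hφd.const_mul (2 : ℝ)
      exact hc.smul hgB
    exact hsmul.congr_of_eventuallyEq key
  have hseconda : ∀ ξ : ℝ × ℝ,
      iteratedFDeriv ℝ 2 (fun y => (φ y) ^ 2) ν ![ξ, ξ]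
        = 2 * φ ν * B ξ ξ + 2 * (g ν ξ) * (g ν ξ) := by
    intro ξ
    rw [iteratedFDeriv_two_apply]
    have := hF'.fderiv
    simp only [Matrix.cons_val_zero, Matrix.cons_val_one, Matrix.head_cons]
    rw [this]
    simp only [ContinuousLinearMap.add_apply, ContinuousLinearMap.smul_apply,
      ContinuousLinearMap.smulRight_apply, smul_eq_mul]
  -- expand B τ' τ'
  have hBτ' : B τ' τ' = α ^ 2 * B τ τ := by
    have hτν : B τ ν = 0 := by rw [hsymm τ ν, euler2]; simp
    have hντ : B ν τ = 0 := by rw [euler2]; simp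
    have hνν : B ν ν = 0 := by rw [euler2]; simp
    rw [hdecomp]
    simp only [map_add, map_smul, ContinuousLinearMap.add_apply,
      ContinuousLinearMap.smul_apply, smul_eq_mul]
    rw [hτν, hντ, hνν]
    ring
  -- main inequality
  have hmain : C ≤ 2 * φ ν * (α ^ 2 * B τ τ) := by
    have := hell ν hν0 τ'
    rw [hseconda τ', hDφ, hBτ'] at this
    simpa [hτ'] using this
  have hiter : iteratedFDeriv ℝ 2 φ ν ![τ, τ] = B τ τ := by
    rw [iteratedFDeriv_two_apply]
    simp only [Matrix.cons_val_zero, Matrix.cons_val_one, Matrix.head_cons]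
    rfl
  have hα2 : α ^ 2 ≤ 1 := by
    rcases hα with ⟨h1, h2⟩; nlinarith
  have hαne : α ≠ 0 := by
    intro h
    rw [h] at hmain; simp at hmain; linarith
  have hBpos : 0 < B τ τ := by
    by_contra h
    push_neg at h
    have h2 : α ^ 2 * B τ τ ≤ 0 := mul_nonpos_of_nonneg_of_nonpos (sq_nonneg α) h
    nlinarith [mul_nonneg hφpos.le (neg_nonneg.2 h2)]
  refine ⟨hαne, ?_, ?_⟩
  · rw [hiter]; linarith [hmain]
  · rw [hiter]
    nlinarith [mul_nonneg (mul_nonneg (mul_nonneg (by norm_num : (0:ℝ) ≤ 2) hφpos.le)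
      hBpos.le) (sub_nonneg.2 hα2)]
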